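/- Let Γ be a strongly regular graph with parameters (v, k, λ, μ) whose complement is connected, and suppose Γ is type II: there exist integers r and s with r ≥ s, s < 0, r + s = λ − μ and r·s = μ − k. Let C(x, y) = x(x+1)(v−y) − 2xy(k−y+1) + y(y−1)(λ−y+2) be the clique adjacency polynomial of Γ. Suppose that 0 < frac(−k/s) < 1 − (r² + r)/(v − 2k + λ), where frac(a) = a − ⌊a⌋ and quantities are computed in ℝ. Then C(⌊−μ/s⌋, ⌊1 − k/s⌋) < 0. -/

import Mathlib

/-- The clique adjacency polynomial over the integers. -/
def cliqueAdjPolyInt (v k lam : ℤ) (x y : ℤ) : ℤ :=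
  x * (x + 1) * (v - y) - 2 * x * y * (k - y + 1) + y * (y - 1) * (lam - y + 2)

open SimpleGraph in
/-- In a connected graph with a nonadjacent pair of distinct vertices, there is a
nonadjacent pair of distinct vertices with a common neighbour. -/
private lemma exists_common_of_connected {V : Type*} (H : SimpleGraph V)
    (hconn : H.Connected) {a b : V} (hne : a ≠ b) (hna : ¬H.Adj a b) :
    ∃ x z, x ≠ z ∧ ¬H.Adj x z ∧ ∃ y, H.Adj x y ∧ H.Adj y z := by
  have key : ∀ N : ℕ, ∀ a b : V, a ≠ b → ¬H.Adj a b → ∀ w : H.Walk a b, w.length ≤ N →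
      ∃ x z, x ≠ z ∧ ¬H.Adj x z ∧ ∃ y, H.Adj x y ∧ H.Adj y z := by
    intro N
    induction N with
    | zero =>
      intro a b hne hna w hlen
      cases w with
      | nil => exact absurd rfl hne
      | cons h p => simp [Walk.length_cons] at hlen
    | succ N ih =>
      intro a b hne hna w hlen
      cases w with
      | nil => exact absurd rfl hne
      | @cons _ c _ hac w' =>
        cases w' with
        | nil => exact absurd hac hna
        | @cons _ d _ hcd w'' =>
          by_cases had : H.Adj a d
          · exact ih a b hne hna (Walk.cons had w'')
              (by simp only [Walk.length_cons] at hlen ⊢; omega)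
          · rcases eq_or_ne a d with rfl | hand
            · exact ih a b hne hna w''
                (by simp only [Walk.length_cons] at hlen ⊢; omega)
            · exact ⟨a, d, hand, had, c, hac, hcd⟩
  obtain ⟨w⟩ := hconn.preconnected a b
  exact key w.length a b hne hna w le_rfl

set_option maxHeartbeats 1000000 in
/-- Corollary `cor:beatDel01` for co-connected type-II strongly
regular graphs. -/
theorem stmt_14 {V : Type*} [Fintype V] [DecidableEq V] (G : SimpleGraph V) [DecidableRel G.Adj]
    (v k lam μ : ℕ) (hsrg : G.IsSRGWith v k lam μ)
    (hnoncomplete : G ≠ ⊤) (hedge : G ≠ ⊥)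
    (hcoconn : Gᶜ.Connected)
    (r s : ℤ) (hrs : s ≤ r) (hs : s < 0)
    (hsum : r + s = (lam : ℤ) - μ) (hprod : r * s = (μ : ℤ) - k)
    (hfrac1 : 0 < Int.fract (-(k : ℝ) / s))
    (hfrac2 : Int.fract (-(k : ℝ) / s) <
      1 - ((r : ℝ) ^ 2 + r) / ((v : ℝ) - 2 * k + lam)) :
    cliqueAdjPolyInt v k lam ⌊-(μ : ℝ) / s⌋ ⌊1 - (k : ℝ) / s⌋ < 0 := by
  -- an edge of G
  obtain ⟨a, b, hab⟩ : ∃ a b, G.Adj a b := by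
    by_contra h
    push_neg at h
    exact hedge (by ext x y; simp [h x y])
  -- a nonadjacent distinct pair of G
  obtain ⟨c, d, hcd, hcdn⟩ : ∃ c d, c ≠ d ∧ ¬G.Adj c d := by
    by_contra h
    push_neg at h
    apply hnoncomplete
    ext x y
    simp only [SimpleGraph.top_adj]
    exact ⟨fun h' => h'.ne, fun hne => h x y hne⟩
  -- basic parameter inequalities
  have hlamk : lam < k := by
    have h1 := hab.card_commonNeighbors_lt_degree
    rwa [hsrg.of_adj a b hab, hsrg.regular a] at h1
  have hmuk : μ ≤ k := by
    have h1 := G.card_commonNeighbors_le_degree_left c d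
    rwa [hsrg.of_not_adj hcd hcdn, hsrg.regular c] at h1
  have hkv : k < v := by
    have h1 := G.degree_lt_card_verts a
    rwa [hsrg.regular a, hsrg.card] at h1
  have hv0 : 0 < v := lt_of_le_of_lt (Nat.zero_le _) hkv
  -- the standard SRG parameter relation, over ℤ
  have hparam := SimpleGraph.IsSRGWith.param_eq G hsrg hv0
  have h1 : lam ≤ k := le_of_lt hlamk
  have h2 : 1 ≤ k - lam := by omega
  have h3 : k ≤ v := hkv.le
  have h4 : 1 ≤ v - k := by omega
  zify [h1, h2, h3, h4] at hparam
  -- the complement parameter μ' = v - 2k + lam is positive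
  have hcompl := hsrg.compl
  obtain ⟨x, z, hxz, hxzn, y, hxy, hyz⟩ :=
    exists_common_of_connected Gᶜ hcoconn hab.ne (fun h => h.2 hab)
  have hm' : Fintype.card (Gᶜ.commonNeighbors x z) = v - (2 * k - lam) :=
    hcompl.of_not_adj hxz hxzn
  have hmpos : 0 < Fintype.card (Gᶜ.commonNeighbors x z) :=
    Fintype.card_pos_iff.mpr ⟨⟨y, hxy, hyz.symm⟩⟩
  have hMnat : 0 < v - (2 * k - lam) := hm' ▸ hmpos
  have hMZ : (0 : ℤ) < (v : ℤ) - 2 * k + lam := by omega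
  -- set up real-number quantities
  have hsR : (s : ℝ) < 0 := by exact_mod_cast hs
  have hsne : (s : ℝ) ≠ 0 := ne_of_lt hsR
  have hmuZ : (μ : ℤ) = (k : ℤ) + r * s := by linarith [hprod]
  have hlamZ : (lam : ℤ) = (μ : ℤ) + r + s := by linarith [hsum]
  set q : ℝ := -(k : ℝ) / s with hqdef
  set f : ℝ := Int.fract q with hfdef
  set n : ℤ := ⌊q⌋ with hndef
  have hf1 : f < 1 := Int.fract_lt_one q
  have hk : (k : ℝ) = -q * s := by rw [hqdef]; field_simp
  have hmuC : (μ : ℝ) = (k : ℝ) + (r : ℝ) * s := by exact_mod_cast hmuZ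
  have hmuR : (μ : ℝ) = s * ((r : ℝ) - q) := by rw [hmuC, hk]; ring
  have hlamC : (lam : ℝ) = (μ : ℝ) + r + s := by exact_mod_cast hlamZ
  have hlamR : (lam : ℝ) = s * ((r : ℝ) - q) + r + s := by rw [hlamC, hmuR]
  have hparamR : (k : ℝ) * ((k : ℝ) - lam - 1) = ((v : ℝ) - k - 1) * μ := by
    exact_mod_cast hparam
  rw [hlamR, hmuR, hk] at hparamR
  -- the key identity  M * (r - q) = r (r+1)(s+1)
  have hkeyR : ((v : ℝ) - 2 * (-q * s) + (s * ((r : ℝ) - q) + r + s)) * ((r : ℝ) - q) =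
      (r : ℝ) * (r + 1) * (s + 1) := by
    apply mul_left_cancel₀ hsne
    linear_combination (-1 : ℝ) * hparamR
  have hMR0 : (0 : ℝ) < (v : ℝ) - 2 * k + lam := by exact_mod_cast hMZ
  have hMR' : (0 : ℝ) < (v : ℝ) - 2 * (-q * s) + (s * ((r : ℝ) - q) + r + s) := by
    rw [← hk, ← hlamR]; exact hMR0
  -- μ > 0 (otherwise the fractional part would vanish)
  have hμpos : 0 < μ := by
    rcases Nat.eq_zero_or_pos μ with h0 | h0
    · exfalso
      rw [h0] at hmuR
      have hq0 : q = (r : ℝ) := by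
        have : (s : ℝ) * ((r : ℝ) - q) = 0 := by simpa using hmuR.symm
        rcases mul_eq_zero.mp this with h | h
        · exact absurd h hsne
        · linarith
      rw [hfdef, hq0, Int.fract_intCast] at hfrac1
      exact lt_irrefl 0 hfrac1
    · exact h0
  have hμR : (0 : ℝ) < (μ : ℝ) := by exact_mod_cast hμpos
  have hrq : (r : ℝ) - q < 0 := by
    by_contra h
    push_neg at h
    have h2' : (s : ℝ) * ((r : ℝ) - q) ≤ 0 := mul_nonpos_iff.mpr (Or.inr ⟨hsR.le, h⟩)
    linarith [hmuR ▸ hμR]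
  have hqr' : (0 : ℝ) < q - (r : ℝ) := by linarith
  -- s ≤ -2
  have hs2 : (s : ℝ) < -1 := by
    have hsint : s ≤ -1 := by omega
    rcases eq_or_lt_of_le hsint with heq | hlt
    · exfalso
      have hse : (s : ℝ) + 1 = 0 := by rw [heq]; norm_num
      have hzero : (r : ℝ) * ((r : ℝ) + 1) * ((s : ℝ) + 1) = 0 := by rw [hse]; ring
      nlinarith [hkeyR, mul_pos hMR' hqr']
    · exact_mod_cast hlt
  -- r (r+1) > 0
  have hrr1 : (0 : ℝ) < (r : ℝ) * ((r : ℝ) + 1) := by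
    by_contra h
    push_neg at h
    have h5 : (0 : ℝ) ≤ (r : ℝ) * ((r : ℝ) + 1) * ((s : ℝ) + 1) := by
      have h6 := mul_nonneg (neg_nonneg.mpr h)
        (neg_nonneg.mpr (by linarith : (s : ℝ) + 1 ≤ 0))
      nlinarith [h6]
    nlinarith [hkeyR, mul_pos hMR' hqr']
  -- r ≥ 1
  have hrsle : r * s ≤ 0 := by rw [hprod]; omega
  have hr0 : 0 ≤ r := by nlinarith [hrsle, hs]
  have hrne : r ≠ 0 := by
    rintro rfl
    norm_num at hrr1
  have hr1 : 1 ≤ r := by omega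
  have hrR : (0 : ℝ) < (r : ℝ) := by exact_mod_cast lt_of_lt_of_le Int.zero_lt_one hr1
  -- the hypothesis hfrac2, cleared of the denominator
  have h12 : (r : ℝ) ^ 2 + r < (1 - f) * ((v : ℝ) - 2 * k + lam) := by
    have := (div_lt_iff₀ hMR0).mp (show ((r : ℝ) ^ 2 + r) / ((v : ℝ) - 2 * k + lam) < 1 - f by
      linarith [hfrac2])
    linarith [this]
  have h12' : (r : ℝ) ^ 2 + r <
      (1 - f) * ((v : ℝ) - 2 * (-q * s) + (s * ((r : ℝ) - q) + r + s)) := by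
    rw [← hk, ← hlamR]; exact h12
  -- q - r < (1 - f)(-s - 1)
  have hqbound : q - (r : ℝ) < (1 - f) * (-(s : ℝ) - 1) := by
    by_contra hcon
    push_neg at hcon
    have hA : (0 : ℝ) < (1 - f) * ((v : ℝ) - 2 * (-q * s) + (s * ((r : ℝ) - q) + r + s)) -
        ((r : ℝ) ^ 2 + r) := by linarith
    have hB' : (0 : ℝ) < -(s : ℝ) - 1 := by linarith
    have h5 : ((v : ℝ) - 2 * (-q * s) + (s * ((r : ℝ) - q) + r + s)) *
        ((1 - f) * (-(s : ℝ) - 1)) ≤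
        ((v : ℝ) - 2 * (-q * s) + (s * ((r : ℝ) - q) + r + s)) * (q - (r : ℝ)) :=
      mul_le_mul_of_nonneg_left hcon hMR'.le
    nlinarith [hkeyR, h5, mul_pos hA hB']
  -- the positive factor B
  have hB : (0 : ℝ) < ((r : ℝ) + 1) * ((r : ℝ) + (1 - f) * (-(s : ℝ) - 1) - q) :=
    mul_pos (by linarith) (by linarith)
  -- the central polynomial identity
  have hC : ((q - f - (r : ℝ)) * ((q - f - (r : ℝ)) + 1) * ((v : ℝ) - (q - f + 1)) -
      2 * (q - f - (r : ℝ)) * (q - f + 1) * (-q * s - (q - f + 1) + 1) +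
      (q - f + 1) * ((q - f + 1) - 1) * ((s * ((r : ℝ) - q) + r + s) - (q - f + 1) + 2)) *
      ((r : ℝ) - q) =
      (r : ℝ) * f * (((r : ℝ) + 1) * ((r : ℝ) + (1 - f) * (-(s : ℝ) - 1) - q)) := by
    linear_combination ((q - f - (r : ℝ)) * ((q - f - (r : ℝ)) + 1)) * hkeyR
  -- compute the two floors
  have hfloor_y : ⌊1 - (k : ℝ) / s⌋ = n + 1 := by
    have e : 1 - (k : ℝ) / s = q + 1 := by rw [hqdef]; ring
    rw [e, Int.floor_add_one, ← hndef]
  have hfloor_x : ⌊-(μ : ℝ) / s⌋ = n - r := by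
    have h : ((-r : ℤ) : ℝ) = ((-r : ℤ) : ℝ) * s / s := by rw [mul_div_cancel_right₀ _ hsne]
    have e : -(μ : ℝ) / s = q + ((-r : ℤ) : ℝ) := by
      rw [hqdef, h, ← add_div, div_eq_div_iff hsne hsne]
      push_cast
      linear_combination -(s : ℝ) * hmuC
    rw [e, Int.floor_add_intCast, ← hndef]
    ring
  rw [hfloor_x, hfloor_y]
  -- pass to the reals
  suffices hlt : ((cliqueAdjPolyInt v k lam (n - r) (n + 1) : ℤ) : ℝ) < 0 by exact_mod_cast hlt
  have hn' : (n : ℝ) = q - f := by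
    rw [hndef, hfdef]
    exact (Int.self_sub_fract q).symm
  have hval : ((cliqueAdjPolyInt v k lam (n - r) (n + 1) : ℤ) : ℝ) =
      (q - f - (r : ℝ)) * ((q - f - (r : ℝ)) + 1) * ((v : ℝ) - (q - f + 1)) -
      2 * (q - f - (r : ℝ)) * (q - f + 1) * (-q * s - (q - f + 1) + 1) +
      (q - f + 1) * ((q - f + 1) - 1) * ((s * ((r : ℝ) - q) + r + s) - (q - f + 1) + 2) := by
    unfold cliqueAdjPolyInt
    push_cast
    rw [hn', hk, hlamR]
  rw [hval]
  by_contra hcg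
  push_neg at hcg
  have h7 : (0 : ℝ) ≤ ((q - f - (r : ℝ)) * ((q - f - (r : ℝ)) + 1) * ((v : ℝ) - (q - f + 1)) -
      2 * (q - f - (r : ℝ)) * (q - f + 1) * (-q * s - (q - f + 1) + 1) +
      (q - f + 1) * ((q - f + 1) - 1) * ((s * ((r : ℝ) - q) + r + s) - (q - f + 1) + 2)) *
      (q - (r : ℝ)) := mul_nonneg hcg hqr'.le
  have hCq : ((q - f - (r : ℝ)) * ((q - f - (r : ℝ)) + 1) * ((v : ℝ) - (q - f + 1)) -
      2 * (q - f - (r : ℝ)) * (q - f + 1) * (-q * s - (q - f + 1) + 1) +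
      (q - f + 1) * ((q - f + 1) - 1) * ((s * ((r : ℝ) - q) + r + s) - (q - f + 1) + 2)) *
      (q - (r : ℝ)) =
      -((r : ℝ) * f * (((r : ℝ) + 1) * ((r : ℝ) + (1 - f) * (-(s : ℝ) - 1) - q))) := by
    linear_combination -hC
  linarith [h7, hCq, mul_pos (mul_pos hrR hfrac1) hB]
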